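/- arXiv:1010.4807 — 4 statements merged into one kernel-verified Lean document; each statement's English description precedes it below -/
import Mathlib

section
/- In the algebra R (with relations [z, z̄] = iħ₁(1 + 2ħ₂γ), γ anticommuting with z, z̄, γ² = 1), for every positive integer p one has the identity (2iħ₁)^{-1}[z², z̄^p] = p·z·z̄^{p-1} − (p(p−1)/2)·iħ₁·z̄^{p−2} − 2iħ₁ħ₂·(−1)^p·⌊p/2⌋·z̄^{p−2}·γ, where ⌊·⌋ denotes the floor function. -/
/-- In the formal symplectic reflection algebra `R` (relations
`[z, z̄] = iħ₁(1 + 2ħ₂γ)`, `γ` anticommuting with `z, z̄`, `γ² = 1`), for every `p ≥ 2`: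
`(2iħ₁)⁻¹[z², z̄^p] = p z z̄^{p-1} − (p(p−1)/2) iħ₁ z̄^{p−2} − 2iħ₁ħ₂ (−1)^p ⌊p/2⌋ z̄^{p−2} γ`,
here stated multiplied through by `2iħ₁`.  (`⌊·⌋` is realized by natural division.) -/
theorem sra_commutator_zsq_zbar_pow
    {K A : Type*} [Field K] [Ring A] [Algebra K A]
    (iK hb1 hb2 : K) (hi : iK * iK = -1)
    (z zb g : A)
    (hrel : z * zb - zb * z = (iK * hb1) • ((1 : A) + (2 * hb2) • g))
    (hgz : g * z = -(z * g)) (hgzb : g * zb = -(zb * g)) (hg2 : g * g = 1)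
    (p : ℕ) (hp : 2 ≤ p) :
    z ^ 2 * zb ^ p - zb ^ p * z ^ 2 =
      (2 * (iK * hb1)) •
        ((p : K) • (z * zb ^ (p - 1))
          - (((p * (p - 1) / 2 : ℕ) : K) * (iK * hb1)) • zb ^ (p - 2)
          - ((2 * (iK * hb1 * hb2) * (-1 : K) ^ p) * (((p / 2 : ℕ) : K))) • (zb ^ (p - 2) * g)) := by
  obtain ⟨m, rfl⟩ : ∃ m, p = m + 2 := ⟨p - 2, by omega⟩
  have hz1 : z * zb = zb * z + (iK * hb1) • ((1:A) + (2*hb2) • g) := by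
    rw [← hrel]; abel
  have key : ∀ n : ℕ, z * zb ^ (n+1) = zb ^ (n+1) * z
      + (((n : K) + 1) * (iK*hb1)) • zb ^ n
      + ((2*(iK*hb1)*hb2) * ((((n+1) % 2 : ℕ)):K)) • (zb ^ n * g) := by
    intro n
    induction n with
    | zero =>
      simp only [pow_one, pow_zero, Nat.cast_zero, zero_add, one_mul, mul_one, Nat.cast_one]
      rw [hz1]
      simp only [smul_add, smul_smul, smul_one]  -- ?
      match_scalars <;> ring
    | succ n ih =>
      have hcast : ((((n+1+1) % 2 : ℕ)):K) = 1 - ((((n+1) % 2 : ℕ)):K) := by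
        have h : (n+1) % 2 + (n+1+1) % 2 = 1 := by omega
        have h2 := congrArg (Nat.cast : ℕ → K) h
        push_cast at h2; linear_combination h2
      have e1 : z * zb ^ (n+1+1) = (z * zb ^ (n+1)) * zb := by
        rw [mul_assoc, ← pow_succ]
      rw [e1, ih, hcast]
      simp only [add_mul, mul_add, smul_add, smul_mul_assoc, mul_smul_comm, mul_assoc,
        hgzb, mul_neg, smul_neg, hz1, pow_succ, mul_one, smul_smul]
      match_scalars <;> push_cast <;> ring

  have hgz' : ∀ w : A, g * (z * w) = -(z * (g * w)) := by
    intro w; rw [← mul_assoc, hgz, neg_mul, mul_assoc]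
  have hg2' : ∀ w : A, g * (g * w) = w := by
    intro w; rw [← mul_assoc, hg2, one_mul]
  have key' : ∀ n : ℕ, ∀ w : A, z * (zb ^ (n+1) * w) = zb ^ (n+1) * (z * w)
      + (((n : K) + 1) * (iK*hb1)) • (zb ^ n * w)
      + ((2*(iK*hb1)*hb2) * ((((n+1) % 2 : ℕ)):K)) • (zb ^ n * (g * w)) := by
    intro n w
    rw [← mul_assoc, key n]
    simp only [add_mul, smul_mul_assoc, mul_assoc]
  have k0 := key m
  have k0' := key' m
  have k1 : z * zb ^ (m+2) = zb ^ (m+2) * z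
      + (((↑(m+1) : K) + 1) * (iK*hb1)) • zb ^ (m+1)
      + ((2*(iK*hb1)*hb2) * ((((m+2) % 2 : ℕ)):K)) • (zb ^ (m+1) * g) := key (m+1)
  have k1' : ∀ w : A, z * (zb ^ (m+2) * w) = zb ^ (m+2) * (z * w)
      + (((↑(m+1) : K) + 1) * (iK*hb1)) • (zb ^ (m+1) * w)
      + ((2*(iK*hb1)*hb2) * ((((m+2) % 2 : ℕ)):K)) • (zb ^ (m+1) * (g * w)) := key' (m+1)
  rw [show m+2-1 = m+1 from by omega, show m+2-2 = m from by omega]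
  simp only [pow_two, mul_assoc, k1', k1, k0', k0, mul_add, add_mul, smul_add, sub_mul, mul_sub,
    smul_sub, mul_smul_comm, smul_mul_assoc, hgz, hgzb, hg2, hgz', hg2', mul_neg, neg_mul,
    smul_neg, mul_one, smul_smul]
  match_scalars
  all_goals push_cast
  all_goals try ring
  · rcases Nat.even_or_odd m with ⟨k, rfl⟩ | ⟨k, rfl⟩
    · rw [show (2 + (k + k) * 3 + (k + k) ^ 2) = 2*(1+3*k+2*k^2) from by ring,
          Nat.mul_div_cancel_left _ (by norm_num),
          show (2+(k+k))%2 = 0 from by omega]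
      push_cast; ring
    · rw [show (2 + (2*k+1) * 3 + (2*k+1) ^ 2) = 2*(3+5*k+2*k^2) from by ring,
          Nat.mul_div_cancel_left _ (by norm_num),
          show (1+(2*k+1))%2 = 0 from by omega]
      push_cast; ring
  · rcases Nat.even_or_odd m with ⟨k, rfl⟩ | ⟨k, rfl⟩
    · rw [show (1+(k+k))%2 = 1 from by omega, show (2+(k+k))%2 = 0 from by omega,
          show (2+(k+k))/2 = k+1 from by omega,
          show ((-1:K))^(k+k) = 1 from Even.neg_one_pow ⟨k, rfl⟩]
      push_cast; ring
    · rw [show (1+(2*k+1))%2 = 0 from by omega, show (2+(2*k+1))%2 = 1 from by omega,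
          show (2+(2*k+1))/2 = k+1 from by omega,
          show ((-1:K))^(2*k+1) = -1 from Odd.neg_one_pow ⟨k, rfl⟩]
      push_cast; ring
end

section
/- In HH₀(D₂((ħ₁))((ħ₂))), for all nonnegative integers p ≠ q with p + q even, the class [z^p z̄^q] vanishes. -/
/-- In `HH₀` of the spherical subalgebra `D₂ = e·R·e` of the formal symplectic
reflection algebra `R`, for all `p ≠ q` with `p + q` even, the class `[z^p z̄^q]` vanishes,
i.e. `z^p z̄^q e` lies in the `K`-span of commutators of elements of `e·R·e`. -/
theorem sra_spherical_hh0_offdiagonal_vanishes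
    {K A : Type*} [Field K] [CharZero K] [Ring A] [Algebra K A]
    (iK hb1 hb2 : K) (hi : iK * iK = -1) (hhb1 : hb1 ≠ 0)
    (z zb g : A)
    (hrel : z * zb - zb * z = (iK * hb1) • ((1 : A) + (2 * hb2) • g))
    (hgz : g * z = -(z * g)) (hgzb : g * zb = -(zb * g)) (hg2 : g * g = 1)
    (e : A) (he : e = ((2 : K)⁻¹) • ((1 : A) + g))
    (p q : ℕ) (hne : p ≠ q) (hev : Even (p + q)) :
    z ^ p * zb ^ q * e ∈
      Submodule.span K
        {x : A | ∃ a b : A, (∃ r, a = e * r * e) ∧ (∃ s, b = e * s * e) ∧ x = a * b - b * a} := by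
  set c := iK * hb1 with hcdef
  set d := 2 * hb2 with hddef
  have hcne : c ≠ 0 := by
    refine mul_ne_zero (fun h => ?_) hhb1
    rw [h] at hi; norm_num at hi
  have h : z * zb - zb * z = c • (1 : A) + (c * d) • g := by
    rw [hrel, smul_add, smul_smul]
  have h0 : zb * z = z * zb - (c • (1 : A) + (c * d) • g) := by rw [← h]; abel
  -- g vs powers
  have hgzn : ∀ n : ℕ, g * z ^ n = ((-1 : K) ^ n) • (z ^ n * g) := by
    intro n
    induction n with
    | zero => simp
    | succ n ih =>
      rw [pow_succ, ← mul_assoc, ih, smul_mul_assoc, mul_assoc, hgz, mul_neg,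
        ← mul_assoc, smul_neg, pow_succ]
      module
  have hgzbn : ∀ n : ℕ, g * zb ^ n = ((-1 : K) ^ n) • (zb ^ n * g) := by
    intro n
    induction n with
    | zero => simp
    | succ n ih =>
      rw [pow_succ, ← mul_assoc, ih, smul_mul_assoc, mul_assoc, hgzb, mul_neg,
        ← mul_assoc, smul_neg, pow_succ]
      module
  -- basic commutators
  have L1 : (z * zb) * z = z * (z * zb) - c • z - (c * d) • (z * g) := by
    rw [mul_assoc, h0]
    simp only [mul_sub, mul_add, mul_smul_comm, mul_one]
    abel
  have L2 : (z * zb) * zb = zb * (z * zb) + c • zb - (c * d) • (zb * g) := by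
    have h2 : z * zb * zb = (c • (1:A) + (c*d) • g) * zb + zb * (z * zb) := by
      rw [← h]; simp only [sub_mul, mul_assoc]; abel
    rw [h2]
    simp only [add_mul, smul_mul_assoc, one_mul, hgzb, smul_neg]
    abel
  have huz : ∀ n : ℕ, (z * zb) * z ^ n
      = z ^ n * (z * zb) - ((n : K) * c) • z ^ n
        - ((1 - (-1 : K) ^ n) / 2 * (c * d)) • (z ^ n * g) := by
    intro n
    induction n with
    | zero => norm_num
    | succ n ih =>
      rw [pow_succ, ← mul_assoc, ih]
      simp only [sub_mul, smul_mul_assoc, mul_assoc]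
      rw [h0, hgz]
      simp only [mul_sub, mul_add, mul_smul_comm, mul_one, mul_neg, smul_neg]
      push_cast
      module
  have huzb : ∀ n : ℕ, (z * zb) * zb ^ n
      = zb ^ n * (z * zb) + ((n : K) * c) • zb ^ n
        - ((1 - (-1 : K) ^ n) / 2 * (c * d)) • (zb ^ n * g) := by
    intro n
    induction n with
    | zero => norm_num
    | succ n ih =>
      rw [pow_succ, ← mul_assoc, ih]
      simp only [sub_mul, add_mul, smul_mul_assoc]
      rw [mul_assoc (zb ^ n) (z * zb) zb, L2, mul_assoc (zb ^ n) g zb, hgzb]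
      simp only [mul_sub, mul_add, mul_smul_comm, mul_neg, smul_neg, mul_assoc]
      push_cast
      module
  -- parity facts
  have hq_of_p_even : Even p → Even q := by
    intro hp
    rcases Nat.even_add.mp hev with h'
    exact h'.mp hp
  have hq_of_p_odd : ¬ Even p → ¬ Even q := by
    intro hp hq
    exact hp ((Nat.even_add.mp hev).mpr hq)
  have hpar : ((-1 : K) ^ p = 1 ∧ (-1 : K) ^ q = 1)
      ∨ ((-1 : K) ^ p = -1 ∧ (-1 : K) ^ q = -1) := by
    by_cases hp : Even p
    · exact Or.inl ⟨hp.neg_one_pow, (hq_of_p_even hp).neg_one_pow⟩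
    · exact Or.inr ⟨(Nat.not_even_iff_odd.mp hp).neg_one_pow,
        (Nat.not_even_iff_odd.mp (hq_of_p_odd hp)).neg_one_pow⟩
  -- key commutator identity
  have key : (z * zb) * (z ^ p * zb ^ q) - (z ^ p * zb ^ q) * (z * zb)
      = (((q : K) - (p : K)) * c) • (z ^ p * zb ^ q) := by
    rw [← mul_assoc, huz p]
    simp only [sub_mul, smul_mul_assoc]
    rw [mul_assoc (z ^ p) (z * zb) (zb ^ q), huzb q, mul_assoc (z ^ p) g (zb ^ q), hgzbn q]
    simp only [mul_sub, mul_add, mul_smul_comm, smul_smul, mul_assoc]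
    rcases hpar with ⟨hp1, hq1⟩ | ⟨hp1, hq1⟩ <;> rw [hp1, hq1] <;> module
  -- e facts
  have he2 : e * e = e := by
    rw [he]
    simp only [smul_mul_assoc, mul_smul_comm, add_mul, mul_add, one_mul, mul_one, hg2, smul_smul]
    module
  have hcomm : ∀ x : A, g * x = x * g → e * x = x * e := by
    intro x hx
    rw [he]
    simp only [smul_mul_assoc, mul_smul_comm, add_mul, mul_add, one_mul, mul_one, hx]
  have hgw : g * (z ^ p * zb ^ q) = (z ^ p * zb ^ q) * g := by
    rw [← mul_assoc, hgzn p, smul_mul_assoc, mul_assoc, hgzbn q, mul_smul_comm, smul_smul,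
      ← mul_assoc, ← pow_add]
    rw [hev.neg_one_pow, one_smul]
  have hgu : g * (z * zb) = (z * zb) * g := by
    rw [← mul_assoc, hgz, neg_mul, mul_assoc, hgzb, mul_neg, neg_neg, mul_assoc]
  -- assemble
  set u := z * zb with hudef
  set w := z ^ p * zb ^ q with hwdef
  have hab : (e * u * e) * (e * w * e) - (e * w * e) * (e * u * e)
      = (((q : K) - (p : K)) * c) • (w * e) := by
    have heu : e * u * e = u * e := by rw [hcomm u hgu, mul_assoc, he2]
    have hew : e * w * e = w * e := by rw [hcomm w hgw, mul_assoc, he2]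
    rw [heu, hew]
    have h1 : (u * e) * (w * e) = (u * w) * e := by
      rw [mul_assoc u e (w * e), ← mul_assoc e w e, hcomm w hgw, mul_assoc w e e, he2,
        ← mul_assoc]
    have h2 : (w * e) * (u * e) = (w * u) * e := by
      rw [mul_assoc w e (u * e), ← mul_assoc e u e, hcomm u hgu, mul_assoc u e e, he2,
        ← mul_assoc]
    rw [h1, h2, ← sub_mul, key, smul_mul_assoc]
  have hsne : ((q : K) - (p : K)) * c ≠ 0 := by
    refine mul_ne_zero (sub_ne_zero.mpr (fun hh => hne ?_)) hcne
    exact_mod_cast hh.symm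
  have hmem : (e * u * e) * (e * w * e) - (e * w * e) * (e * u * e) ∈
      Submodule.span K
        {x : A | ∃ a b : A, (∃ r, a = e * r * e) ∧ (∃ s, b = e * s * e) ∧ x = a * b - b * a} :=
    Submodule.subset_span ⟨e * u * e, e * w * e, ⟨u, rfl⟩, ⟨w, rfl⟩, rfl⟩
  have : w * e = (((q : K) - (p : K)) * c)⁻¹ •
      ((e * u * e) * (e * w * e) - (e * w * e) * (e * u * e)) := by
    rw [hab, smul_smul, inv_mul_cancel₀ hsne, one_smul]
  rw [this]
  exact Submodule.smul_mem _ _ hmem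
end

section
/- Any K-linear trace τ on the spherical subalgebra D₂((ħ₁))((ħ₂)) with τ(1) = 1 satisfies, for every Z₂-invariant polynomial f ∈ C[z, z̄]^{Z₂}, the formula τ(f) = Σ_{k=0}^{∞} (iħ₁)^k/(k!)² · (Π_{l=1}^{k} ( l/2 + (−1)^{l+1}·2⌊(l+1)/2⌋ħ₂/(l+1) )) · ∂^{2k}f/∂z^k∂z̄^k (0,0). In particular, the normalized trace on polynomial elements is unique. -/
/-! **Statement 8.** Uniqueness of the normalized trace on the spherical subalgebra
`D₂((ħ₁))((ħ₂)) = e·R·e` of the formal symplectic reflection algebra `R`: any `K`-linear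
trace `τ` with `τ(1) = 1` (the unit of `e·R·e` being `e`) is given on `Z₂`-invariant
polynomials by the explicit formula
`τ(f) = Σ_k (iħ₁)^k/(k!)² (Π_{l=1}^k (l/2 + (−1)^{l+1} 2⌊(l+1)/2⌋ħ₂/(l+1))) ∂^{2k}f/∂z^k∂z̄^k(0,0)`.
Invariant polynomials `Σ a_{pq} z^p z̄^q` are encoded by coefficients `f : ℕ × ℕ →₀ K`
supported on monomials of even total degree, and since
`∂^{2k}(z^p z̄^q)/∂z^k∂z̄^k (0,0) = (k!)² δ_{pk}δ_{qk}`, the right-hand side is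
`Σ_k (iħ₁)^k (Π_{l=1}^k (...)) a_{kk}`. -/

noncomputable section

open FreeAlgebra

/-- The defining relations of the formal symplectic reflection algebra `R`:
`[z, z̄] = iħ₁(1 + 2ħ₂γ)`, `γz = -zγ`, `γz̄ = -z̄γ`, `γ² = 1`
(generators `0 ↦ z`, `1 ↦ z̄`, `2 ↦ γ`). -/
inductive SRARel (K : Type) [Field K] (iK hb1 hb2 : K) :
    FreeAlgebra K (Fin 3) → FreeAlgebra K (Fin 3) → Prop
  | comm : SRARel K iK hb1 hb2
      (ι K (0 : Fin 3) * ι K (1 : Fin 3) - ι K (1 : Fin 3) * ι K (0 : Fin 3))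
      ((iK * hb1) • (1 + (2 * hb2) • ι K (2 : Fin 3)))
  | gz : SRARel K iK hb1 hb2 (ι K (2 : Fin 3) * ι K (0 : Fin 3))
      (-(ι K (0 : Fin 3) * ι K (2 : Fin 3)))
  | gzb : SRARel K iK hb1 hb2 (ι K (2 : Fin 3) * ι K (1 : Fin 3))
      (-(ι K (1 : Fin 3) * ι K (2 : Fin 3)))
  | gsq : SRARel K iK hb1 hb2 (ι K (2 : Fin 3) * ι K (2 : Fin 3)) 1

variable (K : Type) [Field K] (iK hb1 hb2 : K)

/-- The formal symplectic reflection algebra `R`. -/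
abbrev SRA := RingQuot (SRARel K iK hb1 hb2)

def SRA.z : SRA K iK hb1 hb2 := RingQuot.mkAlgHom K _ (ι K (0 : Fin 3))
def SRA.zb : SRA K iK hb1 hb2 := RingQuot.mkAlgHom K _ (ι K (1 : Fin 3))
def SRA.g : SRA K iK hb1 hb2 := RingQuot.mkAlgHom K _ (ι K (2 : Fin 3))

/-- The symmetrizing idempotent `e = (1 + γ)/2`. -/
def SRA.e : SRA K iK hb1 hb2 := ((2 : K)⁻¹) • (1 + SRA.g K iK hb1 hb2)

/-- The element of the spherical subalgebra `e·R·e` corresponding to a polynomial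
`f = Σ a_{pq} z^p z̄^q` (encoded by its coefficients). -/
def SRA.toR (f : ℕ × ℕ →₀ K) : SRA K iK hb1 hb2 :=
  f.sum fun pq c =>
    c • (SRA.z K iK hb1 hb2 ^ pq.1 * SRA.zb K iK hb1 hb2 ^ pq.2 * SRA.e K iK hb1 hb2)

/-- `(iħ₁)^k · Π_{l=1}^{k} ( l/2 + (−1)^{l+1}·2⌊(l+1)/2⌋·ħ₂/(l+1) )`. -/
def traceCoeff (k : ℕ) : K :=
  (iK * hb1) ^ k * ∏ l ∈ Finset.Icc 1 k,
    ((l : K) / 2 + (-1 : K) ^ (l + 1) * (2 * (((l + 1) / 2 : ℕ) : K) * hb2) / ((l : K) + 1))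

/-- The right-hand side of the trace formula, in coefficient form. -/
def phi (f : ℕ × ℕ →₀ K) : K :=
  f.sum fun pq c => if pq.1 = pq.2 then traceCoeff K iK hb1 hb2 pq.1 * c else 0

namespace Aux

variable {K iK hb1 hb2}

local notation "Z" => SRA.z K iK hb1 hb2
local notation "W" => SRA.zb K iK hb1 hb2
local notation "G" => SRA.g K iK hb1 hb2
local notation "E" => SRA.e K iK hb1 hb2

-- base relations
lemma rel_comm : Z * W - W * Z = (iK * hb1) • (1 + (2*hb2) • G) := by
  have h := RingQuot.mkAlgHom_rel K (SRARel.comm (K := K) (iK := iK) (hb1 := hb1) (hb2 := hb2))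
  simpa [SRA.z, SRA.zb, SRA.g, map_sub, map_mul, map_smul, map_add, map_one] using h

lemma rel_gz : G * Z = -(Z * G) := by
  have h := RingQuot.mkAlgHom_rel K (SRARel.gz (K := K) (iK := iK) (hb1 := hb1) (hb2 := hb2))
  simpa [SRA.z, SRA.g, map_mul, map_neg] using h

lemma rel_gw : G * W = -(W * G) := by
  have h := RingQuot.mkAlgHom_rel K (SRARel.gzb (K := K) (iK := iK) (hb1 := hb1) (hb2 := hb2))
  simpa [SRA.zb, SRA.g, map_mul, map_neg] using h

lemma rel_gsq : G * G = 1 := by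
  have h := RingQuot.mkAlgHom_rel K (SRARel.gsq (K := K) (iK := iK) (hb1 := hb1) (hb2 := hb2))
  simpa [SRA.g, map_mul, map_one] using h

lemma wz : W * Z = Z * W - (iK*hb1) • 1 - (iK*hb1*(2*hb2)) • G := by
  have h := rel_comm (K := K) (iK := iK) (hb1 := hb1) (hb2 := hb2)
  rw [smul_add, smul_smul] at h
  linear_combination (norm := module) -h


def sg (n : ℕ) : K := if Even n then 0 else 1

lemma sg_succ (n : ℕ) : (sg (n+1) : K) = sg n + (-1)^n := by
  rcases Nat.even_or_odd n with h | h
  · simp [sg, h, Nat.even_add_one, h.neg_one_pow]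
  · simp [sg, h, Nat.even_add_one, Nat.not_even_iff_odd.2 h, h.neg_one_pow]

lemma sg_mul_sg_succ (n : ℕ) : (sg n : K) * sg (n+1) = 0 := by
  rcases Nat.even_or_odd n with h | h
  · simp [sg, h]
  · simp [sg, Nat.even_add_one, Nat.not_even_iff_odd.2 h]

lemma sg_succ' (n : ℕ) : (sg (n+1) : K) = 1 - sg n := by
  rcases Nat.even_or_odd n with h | h
  · simp [sg, h, Nat.even_add_one, Nat.not_even_iff_odd]
  · simp [sg, Nat.even_add_one, Nat.not_even_iff_odd.2 h, h]

lemma gz : G * Z = (-1 : K) • (Z * G) := by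
  rw [rel_gz]; exact (neg_one_smul K _).symm

lemma gw : G * W = (-1 : K) • (W * G) := by
  rw [rel_gw]; exact (neg_one_smul K _).symm

lemma wz' : W * Z = Z * W + (-(iK*hb1)) • (1 : SRA K iK hb1 hb2)
    + (-(iK*hb1*(2*hb2))) • G := by
  have h := rel_comm (K := K) (iK := iK) (hb1 := hb1) (hb2 := hb2)
  rw [smul_add, smul_smul] at h
  linear_combination (norm := module) -h

lemma g_zpow (a : ℕ) : G * Z^a = ((-1:K)^a) • (Z^a * G) := by
  induction a with
  | zero => simp
  | succ n ih =>
      rw [pow_succ, ← mul_assoc, ih, smul_mul_assoc, mul_assoc, gz, mul_smul_comm,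
        smul_smul, ← mul_assoc, ← pow_succ, ← pow_succ]

lemma g_wpow (b : ℕ) : G * W^b = ((-1:K)^b) • (W^b * G) := by
  induction b with
  | zero => simp
  | succ n ih =>
      rw [pow_succ, ← mul_assoc, ih, smul_mul_assoc, mul_assoc, gw, mul_smul_comm,
        smul_smul, ← mul_assoc, ← pow_succ, ← pow_succ]

-- A : W^(b+1) * Z
lemma wpow_z (b : ℕ) : W^(b+1) * Z
    = Z * W^(b+1) + (-(((b:K)+1) * (iK*hb1))) • W^b
      + (-(2*hb2*(iK*hb1) * sg (b+1))) • (W^b * G) := by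
  induction b with
  | zero =>
      rw [pow_one, pow_zero, wz']
      have h1 : (sg 1 : K) = 1 := by simp [sg]
      rw [h1]
      simp only [one_mul]
      match_scalars <;> ring
  | succ n ih =>
      calc W^(n+1+1) * Z = W * (W^(n+1) * Z) := by rw [pow_succ', mul_assoc]
        _ = W*(Z*W^(n+1)) + (-(((n:K)+1)*(iK*hb1)))•(W*W^n)
            + (-(2*hb2*(iK*hb1)*sg (n+1)))•(W*(W^n*G)) := by
              rw [ih]; simp only [mul_add, mul_smul_comm]
        _ = (W*Z)*W^(n+1) + (-(((n:K)+1)*(iK*hb1)))•W^(n+1)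
            + (-(2*hb2*(iK*hb1)*sg (n+1)))•(W^(n+1)*G) := by
              simp only [← mul_assoc, ← pow_succ']
        _ = Z*W^(n+1+1) + (-(iK*hb1))•W^(n+1)
            + (-(iK*hb1*(2*hb2)))•((-1:K)^(n+1)•(W^(n+1)*G))
            + (-(((n:K)+1)*(iK*hb1)))•W^(n+1)
            + (-(2*hb2*(iK*hb1)*sg (n+1)))•(W^(n+1)*G) := by
              rw [wz']
              simp only [add_mul, smul_mul_assoc, one_mul]
              rw [mul_assoc, ← pow_succ', g_wpow]
        _ = Z * W^(n+1+1) + (-(((((n+1):ℕ):K)+1) * (iK*hb1))) • W^(n+1)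
            + (-(2*hb2*(iK*hb1) * sg (n+1+1))) • (W^(n+1)*G) := by
              rw [sg_succ (n+1)]
              match_scalars <;> push_cast <;> ring

-- A' : W * Z^(a+1)
lemma w_zpow (a : ℕ) : W * Z^(a+1)
    = Z^(a+1) * W + (-(((a:K)+1) * (iK*hb1))) • Z^a
      + (-(2*hb2*(iK*hb1) * sg (a+1))) • (Z^a * G) := by
  induction a with
  | zero =>
      rw [pow_one, pow_zero, wz']
      have h1 : (sg 1 : K) = 1 := by simp [sg]
      rw [h1]
      simp only [one_mul]
      match_scalars <;> ring
  | succ n ih =>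
      calc W * Z^(n+1+1) = (W * Z^(n+1)) * Z := by rw [pow_succ, ← mul_assoc]
        _ = Z^(n+1)*(W*Z) + (-(((n:K)+1)*(iK*hb1)))•(Z^n*Z)
            + (-(2*hb2*(iK*hb1)*sg (n+1)))•(Z^n*(G*Z)) := by
              rw [ih]; simp only [add_mul, smul_mul_assoc, mul_assoc]
        _ = Z^(n+1)*(Z*W) + (-(iK*hb1))•Z^(n+1)
            + (-(iK*hb1*(2*hb2)))•(Z^(n+1)*G)
            + (-(((n:K)+1)*(iK*hb1)))•Z^(n+1)
            + ((2*hb2*(iK*hb1)*sg (n+1)))•(Z^(n+1)*G) := by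
              rw [wz', gz]
              simp only [mul_add, mul_smul_comm, mul_one, smul_smul, ← mul_assoc, ← pow_succ]
              match_scalars <;> ring
        _ = Z^(n+1+1) * W + (-(((((n+1):ℕ):K)+1) * (iK*hb1))) • Z^(n+1)
            + (-(2*hb2*(iK*hb1) * sg (n+1+1))) • (Z^(n+1)*G) := by
              rw [sg_succ' (n+1), ← mul_assoc, ← pow_succ]
              match_scalars <;> push_cast <;> ring

lemma sg_eq_zero {n : ℕ} (h : Even n) : (sg n : K) = 0 := if_pos h
lemma sg_eq_one {n : ℕ} (h : ¬ Even n) : (sg n : K) = 1 := if_neg h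

-- W * Z^2 and W^2 * Z, clean forms
lemma w_z2 : W * Z^2 = Z^2 * W + (-((iK*hb1)*2)) • Z := by
  rw [pow_two, ← mul_assoc, wz']
  simp only [add_mul, smul_mul_assoc, one_mul, mul_assoc]
  rw [wz', gz]
  simp only [mul_add, mul_smul_comm, smul_smul, mul_one, ← mul_assoc, ← pow_two]
  match_scalars <;> ring

lemma w2_z : W^2 * Z = Z * W^2 + (-((iK*hb1)*2)) • W := by
  rw [pow_two, mul_assoc, wz']
  simp only [mul_add, mul_smul_comm, mul_one, ← mul_assoc]
  rw [wz']
  simp only [add_mul, smul_mul_assoc, one_mul]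
  rw [gw]
  simp only [smul_smul, mul_assoc, ← pow_two]
  match_scalars <;> ring

-- B : W^(b+2) * Z^2
lemma wpow_z2 (b : ℕ) : W^(b+1+1) * Z^2
    = Z^2 * W^(b+1+1)
      + (-(2*((b:K)+2) * (iK*hb1))) • (Z * W^(b+1))
      + (((b:K)+2)*((b:K)+1) * (iK*hb1)^2) • W^b
      + (2*hb2*(iK*hb1)^2*(((b:K)+2)*sg (b+1) - ((b:K)+1)*sg (b+1+1))) • (W^b * G) := by
  rw [pow_two, ← mul_assoc, wpow_z (b+1)]
  simp only [add_mul, smul_mul_assoc, mul_assoc]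
  rw [wpow_z (b+1), gz]
  simp only [mul_smul_comm, smul_smul, ← mul_assoc, ← pow_two]
  rw [wpow_z b]
  simp only [mul_add, add_mul, mul_smul_comm, smul_mul_assoc, smul_add, smul_smul,
    mul_assoc]
  rw [rel_gsq]
  simp only [mul_one]
  rw [← mul_assoc Z Z _, ← pow_two]
  rcases Nat.even_or_odd b with hb | hb
  · have h1 : (sg (b+1) : K) = 1 := sg_eq_one (by simp [Nat.even_add_one, hb])
    have h2 : (sg (b+1+1) : K) = 0 := sg_eq_zero (by simp [Nat.even_add_one, Nat.not_even_iff_odd, hb])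
    rw [h1, h2]
    match_scalars <;> push_cast <;> ring
  · have h1 : (sg (b+1) : K) = 0 := sg_eq_zero (by simp [Nat.even_add_one, Nat.not_even_iff_odd, hb])
    have h2 : (sg (b+1+1) : K) = 1 := sg_eq_one (by simp [Nat.even_add_one, Nat.not_even_iff_odd, hb])
    rw [h1, h2]
    match_scalars <;> push_cast <;> ring

lemma g_e : G * E = E := by
  rw [SRA.e, mul_smul_comm, mul_add, mul_one, rel_gsq, add_comm]

lemma e_sq [CharZero K] : E * E = E := by
  rw [SRA.e, smul_mul_assoc, mul_smul_comm, smul_smul, add_mul, one_mul, mul_add,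
    mul_one, rel_gsq]
  have h2 : (2:K) ≠ 0 := two_ne_zero
  match_scalars <;> field_simp <;> ring

lemma e_zw (a b : ℕ) (h : Even (a+b)) : E * (Z^a * W^b) = Z^a * (W^b * E) := by
  rw [SRA.e]
  simp only [smul_mul_assoc, mul_smul_comm, add_mul, mul_add, one_mul, mul_one]
  rw [← mul_assoc G (Z^a) (W^b), g_zpow]
  simp only [smul_mul_assoc, mul_assoc]
  rw [g_wpow]
  simp only [mul_smul_comm, smul_smul, ← pow_add, Even.neg_one_pow h]
  match_scalars <;> ring

lemma e_z2 : E * Z^2 = Z^2 * E := by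
  have h := e_zw (K := K) (iK := iK) (hb1 := hb1) (hb2 := hb2) 2 0 (by simp)
  simpa using h

lemma e_w2 : E * W^2 = W^2 * E := by
  have h := e_zw (K := K) (iK := iK) (hb1 := hb1) (hb2 := hb2) 0 2 (by simp)
  simpa using h

section CZ
variable [CharZero K]

lemma e_fix (a b : ℕ) (h : Even (a+b)) : E * (Z^a * (W^b * E)) = Z^a * (W^b * E) := by
  calc E * (Z^a * (W^b * E)) = (E * (Z^a * W^b)) * E := by
        rw [← mul_assoc, ← mul_assoc, mul_assoc E (Z^a) (W^b)]
    _ = (Z^a * (W^b * E)) * E := by rw [e_zw a b h]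
    _ = Z^a * (W^b * (E * E)) := by rw [mul_assoc, mul_assoc]
    _ = Z^a * (W^b * E) := by rw [e_sq]

lemma mem_gen (a b : ℕ) (h : Even (a+b)) : Z^a * (W^b * E) = E * (Z^a * W^b) * E := by
  have h1 : E * (Z^a * W^b) * E = Z^a * (W^b * E) := by
    rw [e_zw a b h, mul_assoc, mul_assoc, e_sq]
  exact h1.symm

lemma e_z2e : E * (Z^2 * E) = Z^2 * E := by
  rw [← mul_assoc, e_z2, mul_assoc, e_sq]

lemma e_w2e : E * (W^2 * E) = W^2 * E := by
  rw [← mul_assoc, e_w2, mul_assoc, e_sq]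

lemma mem_z2 : Z^2 * E = E * (Z^2) * E := by rw [mul_assoc, e_z2e]
lemma mem_w2 : W^2 * E = E * (W^2) * E := by rw [mul_assoc, e_w2e]

lemma prod_xy (a b : ℕ) (h : Even (a+b)) :
    (Z^2 * E) * (Z^a * (W^b * E)) = Z^(a+2) * (W^b * E) := by
  rw [mul_assoc, e_fix a b h, ← mul_assoc, ← mul_assoc, ← pow_add, Nat.add_comm 2 a,
    mul_assoc]

lemma prod_yx_core (a b : ℕ) :
    (Z^a * (W^b * E)) * (Z^2 * E) = Z^a * ((W^b * Z^2) * E) := by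
  rw [mul_assoc (Z^a) (W^b*E), mul_assoc (W^b) E, e_z2e, ← mul_assoc (W^b) (Z^2) E]

lemma prod_yx (a b : ℕ) :
    (Z^a * (W^(b+1+1) * E)) * (Z^2 * E)
      = Z^(a+2) * (W^(b+1+1) * E)
        + (-(2*((b:K)+2) * (iK*hb1))) • (Z^(a+1) * (W^(b+1) * E))
        + (((b:K)+2)*((b:K)+1) * (iK*hb1)^2) • (Z^a * (W^b * E))
        + (2*hb2*(iK*hb1)^2*(((b:K)+2)*sg (b+1) - ((b:K)+1)*sg (b+1+1)))
            • (Z^a * (W^b * E)) := by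
  rw [prod_yx_core, wpow_z2 b]
  simp only [add_mul, smul_mul_assoc, mul_add, mul_smul_comm]
  rw [mul_assoc (W^b) G E, g_e, mul_assoc (Z^2) (W^(b+1+1)) E,
    ← mul_assoc (Z^a) (Z^2), ← pow_add, mul_assoc Z (W^(b+1)) E,
    ← mul_assoc (Z^a) Z, ← pow_succ]

end CZ

section CZ2
variable [CharZero K]

lemma prod_base_z (p : ℕ) :
    (Z^(p+1) * (W^1 * E)) * (Z^2 * E)
      = Z^(p+1+2) * (W^1 * E) + (-((iK*hb1)*2)) • (Z^(p+1+1) * E) := by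
  rw [prod_yx_core, pow_one, w_z2]
  simp only [add_mul, smul_mul_assoc, mul_add, mul_smul_comm]
  rw [mul_assoc (Z^2) W E, ← mul_assoc (Z^(p+1)) (Z^2), ← pow_add,
    ← mul_assoc (Z^(p+1)) Z, ← pow_succ]

lemma e_fix1 (b : ℕ) (h : Even (1+b)) : E * (Z * (W^b * E)) = Z * (W^b * E) := by
  have h1 := e_fix (K:=K) (iK:=iK) (hb1:=hb1) (hb2:=hb2) 1 b h
  rwa [pow_one] at h1

lemma prod_base_w_xy (q : ℕ) (h : Even q) :
    (W^2 * E) * (Z * (W^(q+1) * E))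
      = Z * (W^(2+(q+1)) * E) + (-((iK*hb1)*2)) • (W^(q+1+1) * E) := by
  rw [mul_assoc, e_fix1 (q+1) (by rcases h with ⟨k,hk⟩; exact ⟨k+1, by omega⟩),
    ← mul_assoc, w2_z]
  simp only [add_mul, smul_mul_assoc]
  rw [mul_assoc Z (W^2), ← mul_assoc (W^2) (W^(q+1)) E, ← pow_add,
    ← mul_assoc W (W^(q+1)) E, ← pow_succ']

lemma prod_base_w_yx (q : ℕ) :
    (Z * (W^(q+1) * E)) * (W^2 * E) = Z * (W^(q+1+2) * E) := by
  rw [mul_assoc Z (W^(q+1)*E), mul_assoc (W^(q+1)) E, e_w2e,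
    ← mul_assoc (W^(q+1)) (W^2) E, ← pow_add]

lemma mem_z1w (q : ℕ) (h : Even (1+(q+1))) : Z * (W^(q+1) * E) = E * (Z * W^(q+1)) * E := by
  have h1 := mem_gen (K:=K) (iK:=iK) (hb1:=hb1) (hb2:=hb2) 1 (q+1) h
  rwa [pow_one] at h1

end CZ2

section Tau
variable [CharZero K] (τ : SRA K iK hb1 hb2 →ₗ[K] K)
variable (htr : ∀ a b : SRA K iK hb1 hb2,
      (∃ r, a = SRA.e K iK hb1 hb2 * r * SRA.e K iK hb1 hb2) →
      (∃ s, b = SRA.e K iK hb1 hb2 * s * SRA.e K iK hb1 hb2) → τ (a * b - b * a) = 0)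

include htr

lemma trace_eq (x y : SRA K iK hb1 hb2)
    (hx : ∃ r, x = SRA.e K iK hb1 hb2 * r * SRA.e K iK hb1 hb2)
    (hy : ∃ s, y = SRA.e K iK hb1 hb2 * s * SRA.e K iK hb1 hb2) :
    τ (x * y) = τ (y * x) := by
  have h := htr x y hx hy
  rw [map_sub] at h
  exact sub_eq_zero.mp h

lemma rel_rec (a b : ℕ) (h : Even (a+b)) :
    (2*((b:K)+2)*(iK*hb1)) * τ (Z^(a+1) * (W^(b+1) * E))
      = ((iK*hb1)^2*(((b:K)+2)*((b:K)+1)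
          + 2*hb2*(((b:K)+2)*sg (b+1) - ((b:K)+1)*sg (b+1+1)))) * τ (Z^a * (W^b * E)) := by
  have hev2 : Even (a+(b+1+1)) := by rcases h with ⟨k,hk⟩; exact ⟨k+1, by omega⟩
  have heq := trace_eq (K:=K) (iK:=iK) (hb1:=hb1) (hb2:=hb2) τ htr
    (Z^2 * E) (Z^a * (W^(b+1+1) * E)) ⟨Z^2, mem_z2⟩
    ⟨Z^a * W^(b+1+1), mem_gen a (b+1+1) hev2⟩
  rw [prod_xy a (b+1+1) hev2, prod_yx a b, map_add, map_add, map_add,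
    map_smul, map_smul, map_smul, smul_eq_mul, smul_eq_mul, smul_eq_mul] at heq
  linear_combination heq

lemma rel_base_z (hc : iK*hb1 ≠ 0) (p : ℕ) (h : Even p) : τ (Z^(p+1+1) * E) = 0 := by
  have hev : Even ((p+1)+1) := by rcases h with ⟨k,hk⟩; exact ⟨k+1, by omega⟩
  have heq := trace_eq (K:=K) (iK:=iK) (hb1:=hb1) (hb2:=hb2) τ htr
    (Z^(p+1) * (W^1 * E)) (Z^2 * E) ⟨Z^(p+1) * W^1, mem_gen (p+1) 1 hev⟩ ⟨Z^2, mem_z2⟩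
  rw [prod_base_z p, prod_xy (p+1) 1 hev, map_add, map_smul, smul_eq_mul] at heq
  have h2 : (-((iK*hb1)*2)) * τ (Z^(p+1+1) * E) = 0 := by linear_combination heq
  rcases mul_eq_zero.mp h2 with h3 | h3
  · exact absurd h3 (by simp [hc, two_ne_zero])
  · exact h3

lemma rel_base_w (hc : iK*hb1 ≠ 0) (q : ℕ) (h : Even q) : τ (W^(q+1+1) * E) = 0 := by
  have hev : Even (1+(q+1)) := by rcases h with ⟨k,hk⟩; exact ⟨k+1, by omega⟩
  have heq := trace_eq (K:=K) (iK:=iK) (hb1:=hb1) (hb2:=hb2) τ htr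
    (W^2 * E) (Z * (W^(q+1) * E)) ⟨W^2, mem_w2⟩ ⟨Z * W^(q+1), mem_z1w q hev⟩
  rw [prod_base_w_xy q h, prod_base_w_yx q, map_add, map_smul, smul_eq_mul] at heq
  have hexp : 2+(q+1) = q+1+2 := by omega
  rw [hexp] at heq
  have h2 : (-((iK*hb1)*2)) * τ (W^(q+1+1) * E) = 0 := by linear_combination heq
  rcases mul_eq_zero.mp h2 with h3 | h3
  · exact absurd h3 (by simp [hc, two_ne_zero])
  · exact h3

end Tau

lemma tc_succ (k : ℕ) : traceCoeff K iK hb1 hb2 (k+1)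
    = ((iK*hb1) * (((k+1:ℕ):K)/2
        + (-1:K)^(k+1+1) * (2*((((k+1+1)/2 : ℕ)):K)*hb2) / (((k+1:ℕ):K)+1)))
      * traceCoeff K iK hb1 hb2 k := by
  rw [traceCoeff, traceCoeff, Finset.prod_Icc_succ_top (Nat.le_add_left 1 k), pow_succ]
  ring

section Main
variable [CharZero K] (τ : SRA K iK hb1 hb2 →ₗ[K] K)
variable (htr : ∀ a b : SRA K iK hb1 hb2,
      (∃ r, a = SRA.e K iK hb1 hb2 * r * SRA.e K iK hb1 hb2) →
      (∃ s, b = SRA.e K iK hb1 hb2 * s * SRA.e K iK hb1 hb2) → τ (a * b - b * a) = 0)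

include htr

lemma Tval (hc : iK*hb1 ≠ 0) (hnorm : τ (SRA.e K iK hb1 hb2) = 1) :
    ∀ n p q : ℕ, p + q = n → Even n →
      τ (Z^p * (W^q * E)) = if p = q then traceCoeff K iK hb1 hb2 p else 0 := by
  intro n
  induction n using Nat.strong_induction_on with
  | _ n IH =>
    intro p q hpq hev
    rcases p with _ | p <;> rcases q with _ | q
    · simp only [pow_zero, one_mul, if_pos rfl]
      rw [hnorm]
      simp [traceCoeff]
    · -- p = 0, q+1
      have hevq : Even (q+1) := by
        have := hev; rw [← hpq] at this; simpa using this
      have hq : Odd q := Nat.not_even_iff_odd.mp (Nat.even_add_one.mp hevq)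
      obtain ⟨t, rfl⟩ := hq
      rw [if_neg (by omega)]
      have h0 := rel_base_w (K:=K) (iK:=iK) (hb1:=hb1) (hb2:=hb2) τ htr hc (2*t) ⟨t, by omega⟩
      simpa [pow_zero, one_mul] using h0
    · -- p+1, q = 0
      have hevp : Even (p+1) := by
        have := hev; rw [← hpq] at this; simpa using this
      have hp : Odd p := Nat.not_even_iff_odd.mp (Nat.even_add_one.mp hevp)
      obtain ⟨t, rfl⟩ := hp
      rw [if_neg (by omega)]
      have h0 := rel_base_z (K:=K) (iK:=iK) (hb1:=hb1) (hb2:=hb2) τ htr hc (2*t) ⟨t, by omega⟩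
      simpa [pow_zero, one_mul] using h0
    · -- p+1, q+1
      have hev' : Even (p+q) := by
        obtain ⟨m, hm⟩ := hev
        exact ⟨m-1, by omega⟩
      have hrec := rel_rec (K:=K) (iK:=iK) (hb1:=hb1) (hb2:=hb2) τ htr p q hev'
      have hIH := IH (p+q) (by omega) p q rfl hev'
      rw [hIH] at hrec
      have hq2 : ((q:K)+2) ≠ 0 := by
        have : ((q:K)+2) = ((q+2 : ℕ) : K) := by push_cast; ring
        rw [this]
        exact Nat.cast_ne_zero.mpr (by omega)
      have hA : (2*((q:K)+2)*(iK*hb1)) ≠ 0 :=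
        mul_ne_zero (mul_ne_zero two_ne_zero hq2) hc
      by_cases hpq' : p = q
      · subst hpq'
        rw [if_pos rfl] at hrec
        rw [if_pos rfl]
        apply mul_left_cancel₀ hA
        rw [hrec, tc_succ]
        rcases Nat.even_or_odd p with hp | hp
        · obtain ⟨t, rfl⟩ := hp
          have hdiv : ((t+t+1+1)/2 : ℕ) = t+1 := by omega
          have hs1 : (sg (t+t+1) : K) = 1 :=
            sg_eq_one (Nat.not_even_iff_odd.mpr ⟨t, by omega⟩)
          have hs2 : (sg (t+t+1+1) : K) = 0 :=
            sg_eq_zero ⟨t+1, by omega⟩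
          have hpow : (-1:K)^(t+t+1+1) = 1 := Even.neg_one_pow ⟨t+1, by omega⟩
          rw [hdiv, hs1, hs2, hpow]
          have hden : ((t:K)+(t:K)+1+1) ≠ 0 := by
            have : ((t:K)+(t:K)+1+1) = ((t+t+2 : ℕ) : K) := by push_cast; ring
            rw [this]; exact Nat.cast_ne_zero.mpr (by omega)
          push_cast
          field_simp
          have hden2 : ((t:K)*(1+1)+1+1) ≠ 0 := by convert hden using 1; ring
          field_simp
          ring
        · obtain ⟨t, rfl⟩ := hp
          have hdiv : ((2*t+1+1+1)/2 : ℕ) = t+1 := by omega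
          have hs1 : (sg (2*t+1+1) : K) = 0 := sg_eq_zero ⟨t+1, by omega⟩
          have hs2 : (sg (2*t+1+1+1) : K) = 1 :=
            sg_eq_one (Nat.not_even_iff_odd.mpr ⟨t+1, by omega⟩)
          have hpow : (-1:K)^(2*t+1+1+1) = -1 := Odd.neg_one_pow ⟨t+1, by omega⟩
          rw [hdiv, hs1, hs2, hpow]
          have hden : ((2:K)*(t:K)+1+1+1) ≠ 0 := by
            have : ((2:K)*(t:K)+1+1+1) = ((2*t+3 : ℕ) : K) := by push_cast; ring
            rw [this]; exact Nat.cast_ne_zero.mpr (by omega)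
          push_cast
          field_simp
          ring
      · rw [if_neg hpq'] at hrec
        rw [if_neg (by omega)]
        have h0 : (2*((q:K)+2)*(iK*hb1)) * τ (Z^(p+1) * (W^(q+1) * E)) = 0 := by
          rw [hrec]; ring
        exact (mul_eq_zero.mp h0).resolve_left hA

end Main

end Aux

open Aux in
/-- Any `K`-linear trace on `D₂((ħ₁))((ħ₂)) = e·R·e` normalized by
`τ(e) = 1` is given on invariant polynomials by the explicit formula; in particular the
normalized trace is unique on polynomial elements. -/
theorem normalized_trace_unique [CharZero K] (hi : iK * iK = -1) (hhb1 : hb1 ≠ 0)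
    (τ : SRA K iK hb1 hb2 →ₗ[K] K)
    (htrace : ∀ a b : SRA K iK hb1 hb2,
      (∃ r, a = SRA.e K iK hb1 hb2 * r * SRA.e K iK hb1 hb2) →
      (∃ s, b = SRA.e K iK hb1 hb2 * s * SRA.e K iK hb1 hb2) →
      τ (a * b - b * a) = 0)
    (hnorm : τ (SRA.e K iK hb1 hb2) = 1) :
    ∀ f : ℕ × ℕ →₀ K, (∀ pq ∈ f.support, Even (pq.1 + pq.2)) →
      τ (SRA.toR K iK hb1 hb2 f) = phi K iK hb1 hb2 f := by
  intro f hf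
  have hiK : iK ≠ 0 := by intro h; rw [h] at hi; norm_num at hi
  have hc : iK * hb1 ≠ 0 := mul_ne_zero hiK hhb1
  rw [SRA.toR, phi, map_finsuppSum]
  apply Finsupp.sum_congr
  intro pq hpqmem
  have hev := hf pq hpqmem
  have hkey := Tval (K:=K) (iK:=iK) (hb1:=hb1) (hb2:=hb2) τ htrace hc hnorm
    (pq.1+pq.2) pq.1 pq.2 rfl hev
  rw [map_smul, smul_eq_mul, mul_assoc, hkey]
  split_ifs <;> ring


end
end

section
/- Let φ be the normalized trace on the Dunkl–Weyl algebra and let ψ_{2n−2} be defined on the tensor product algebra W_{n−1}((ħ₁)) ⊗ D_K((ħ₁))((ħ₂)) by ψ_{2n−2}(a₀⊗b₀, …, a_{2n−2}⊗b_{2n−2}) = τ_{2n−2}(a₀,…,a_{2n−2})·φ(b₀ ⋆ ⋯ ⋆ b_{2n−2}), where τ_{2n−2} is a normalized sp_{2n−2}-basic Hochschild cocycle of the Weyl algebra W_{n−1}((ħ₁)). Then ψ_{2n−2} is a Hochschild (2n−2)-cocycle, and it is basic with respect to the Lie algebra sp_{2n−2} ⊕ u₁ embedded via A ⊕ α ↦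 (1/2)Σ a_{ij}w_i w_j ⊗ 1 + 1 ⊗ α z z̄: for any γ in the image of this embedding, both Σ_j ψ_{2n−2}(…, [γ, a_j⊗b_j]_{ħ₁}, …) = 0 and Σ_j ψ_{2n−2}(a₀⊗b₀, …, γ, a_j⊗b_j, …) = 0 (with 2n−2 total entries after γ insertion). -/
open scoped TensorProduct

/-- The tuple obtained from `(a₀, …, a_{d+1})` by multiplying the adjacent entries at
positions `i, i+1`. -/
def hochMerge {A : Type*} [Mul A] {d : ℕ} (a : Fin (d + 2) → A) (i : Fin (d + 1)) :
    Fin (d + 1) → A := fun j =>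
  if (j : ℕ) < (i : ℕ) then a (Fin.castSucc j)
  else if (j : ℕ) = (i : ℕ) then a (Fin.castSucc j) * a j.succ
  else a j.succ

/-- The tuple `(a_{d+1}·a₀, a₁, …, a_d)`. -/
def hochCyc {A : Type*} [Mul A] {d : ℕ} (a : Fin (d + 2) → A) : Fin (d + 1) → A := fun j =>
  if j = 0 then a (Fin.last (d + 1)) * a 0 else a (Fin.castSucc j)

/-- A Hochschild `d`-cocycle of an algebra `A` with values in the dual `A*`, viewed as a
multilinear functional on `d + 1` arguments `(a₀, …, a_d)` killed by the Hochschild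
coboundary. -/
def IsHochschildCocycle {K A : Type*} [CommRing K] [Ring A] [Algebra K A] {d : ℕ}
    (φ : MultilinearMap K (fun _ : Fin (d + 1) => A) K) : Prop :=
  ∀ a : Fin (d + 2) → A,
    (∑ i : Fin (d + 1), (-1 : K) ^ (i : ℕ) • φ (hochMerge a i)) +
      (-1 : K) ^ (d + 1) • φ (hochCyc a) = 0

section ListLemmas

variable {A : Type*} [Monoid A]

theorem hochMerge_zero {d : ℕ} (g : Fin (d + 2) → A) :
    hochMerge g 0 = Fin.cons (g 0 * g 1) (fun k : Fin d => g k.succ.succ) := by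
  funext j
  induction j using Fin.cases with
  | zero => simp [hochMerge]
  | succ k => simp [hochMerge]

theorem hochMerge_succ {d : ℕ} (g : Fin (d + 3) → A) (i : Fin (d + 1)) :
    hochMerge g i.succ = Fin.cons (g 0) (hochMerge (fun k => g k.succ) i) := by
  funext j
  induction j using Fin.cases with
  | zero => simp [hochMerge]
  | succ k =>
    simp only [hochMerge, Fin.cons_succ, Fin.val_succ, add_lt_add_iff_right, add_left_inj]
    rcases lt_trichotomy (k : ℕ) (i : ℕ) with h | h | h
    · rw [if_pos h, if_pos h, ← Fin.succ_castSucc]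
    · rw [if_neg (by omega), if_pos h, if_neg (by omega), if_pos h, ← Fin.succ_castSucc]
    · rw [if_neg (by omega), if_neg (by omega), if_neg (by omega), if_neg (by omega)]

theorem prod_ofFn_hochMerge : ∀ {N : ℕ} (g : Fin (N + 2) → A) (i : Fin (N + 1)),
    (List.ofFn (hochMerge g i)).prod = (List.ofFn g).prod := by
  intro N
  induction N with
  | zero =>
    intro g i
    rw [Fin.fin_one_eq_zero i, hochMerge_zero]
    simp [List.ofFn_succ]
  | succ N ih =>
    intro g i
    induction i using Fin.cases with
    | zero =>
      rw [hochMerge_zero]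
      simp [List.ofFn_succ, mul_assoc]
    | succ i =>
      rw [hochMerge_succ]
      rw [List.ofFn_succ, Fin.cons_zero, List.prod_cons]
      simp only [Fin.cons_succ]
      rw [ih, List.ofFn_succ (f := g), List.prod_cons]

theorem prod_ofFn_hochCyc {d : ℕ} (g : Fin (d + 2) → A) :
    (List.ofFn (hochCyc g)).prod =
      g (Fin.last (d + 1)) * (List.ofFn (fun k : Fin (d + 1) => g k.castSucc)).prod := by
  have h : hochCyc g = Fin.cons (g (Fin.last (d + 1)) * g 0)
      (fun k : Fin d => g k.succ.castSucc) := by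
    funext j
    induction j using Fin.cases with
    | zero => simp [hochCyc]
    | succ k => simp [hochCyc, Fin.succ_ne_zero]
  rw [h, List.ofFn_succ, List.prod_cons, Fin.cons_zero]
  rw [List.ofFn_succ (f := fun k : Fin (d + 1) => g k.castSucc), List.prod_cons]
  simp only [Fin.cons_succ, Fin.castSucc_zero, mul_assoc]

end ListLemmas

section Telescope

theorem sum_prod_update_comm {D : Type*} [Ring D] (u : D) :
    ∀ {n : ℕ} (d : Fin n → D),
      ∑ j, (List.ofFn (Function.update d j (u * d j - d j * u))).prod
        = u * (List.ofFn d).prod - (List.ofFn d).prod * u := by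
  intro n
  induction n with
  | zero => intro d; simp
  | succ n ih =>
    intro d
    have h0 : ∀ x : D, List.ofFn (Function.update d 0 x)
        = x :: List.ofFn (fun k : Fin n => d k.succ) := by
      intro x
      rw [List.ofFn_succ, Function.update_self]
      congr 2
    have hsucc : ∀ (j : Fin n) (x : D), List.ofFn (Function.update d j.succ x)
        = d 0 :: List.ofFn (Function.update (fun k : Fin n => d k.succ) j x) := by
      intro j x
      rw [List.ofFn_succ, Function.update_of_ne (Fin.succ_ne_zero j).symm]
      congr 2
      funext k
      rcases eq_or_ne k j with h | h
      · subst h; simp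
      · rw [Function.update_of_ne (fun hh => h (Fin.succ_injective _ hh)),
          Function.update_of_ne h]
    rw [Fin.sum_univ_succ, h0]
    have : ∀ j : Fin n, (List.ofFn (Function.update d j.succ
        (u * d j.succ - d j.succ * u))).prod
        = d 0 * (List.ofFn (Function.update (fun k : Fin n => d k.succ) j
            (u * (fun k : Fin n => d k.succ) j - (fun k : Fin n => d k.succ) j * u))).prod := by
      intro j
      rw [hsucc, List.prod_cons]
    rw [Finset.sum_congr rfl (fun j _ => this j), ← Finset.mul_sum, ih, List.prod_cons,
      List.ofFn_succ (f := d), List.prod_cons]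
    noncomm_ring

end Telescope

section UpdateLemmas

variable {A : Type*} [Mul A]

theorem hochMerge_update_lt {d : ℕ} (a : Fin (d + 2) → A) (k : Fin (d + 2)) (v : A)
    (i : Fin (d + 1)) (h : (k : ℕ) < (i : ℕ)) :
    hochMerge (Function.update a k v) i
      = Function.update (hochMerge a i) ⟨(k : ℕ), by omega⟩ v := by
  funext j
  simp only [hochMerge, Function.update_apply, Fin.ext_iff, Fin.coe_castSucc, Fin.val_succ]
  split_ifs <;> first
    | rfl
    | omega
    | (exact absurd ‹False› not_false)
    | (exact congrArg _ (Fin.val_injective (by first | omega | (simp; omega))))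
    | (exact congrArg₂ _ (congrArg _ (Fin.val_injective (by first | omega | (simp; omega))))
        (congrArg _ (Fin.val_injective (by first | omega | (simp; omega)))))

theorem hochMerge_update_eq {d : ℕ} (a : Fin (d + 2) → A) (k : Fin (d + 2)) (v : A)
    (i : Fin (d + 1)) (h : (k : ℕ) = (i : ℕ)) :
    hochMerge (Function.update a k v) i
      = Function.update (hochMerge a i) i (v * a i.succ) := by
  funext j
  simp only [hochMerge, Function.update_apply, Fin.ext_iff, Fin.coe_castSucc, Fin.val_succ]
  split_ifs <;> first
    | rfl
    | omega
    | (exact absurd ‹False› not_false)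
    | (exact congrArg _ (Fin.val_injective (by first | omega | (simp; omega))))
    | (exact congrArg₂ _ (congrArg _ (Fin.val_injective (by first | omega | (simp; omega))))
        (congrArg _ (Fin.val_injective (by first | omega | (simp; omega)))))
    | (exact congrArg₂ _ rfl (congrArg _ (Fin.val_injective (by first | omega | (simp; omega)))))
    | (exact congrArg₂ _ (congrArg _ (Fin.val_injective (by first | omega | (simp; omega)))) rfl)

theorem hochMerge_update_eqsucc {d : ℕ} (a : Fin (d + 2) → A) (k : Fin (d + 2)) (v : A)
    (i : Fin (d + 1)) (h : (k : ℕ) = (i : ℕ) + 1) :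
    hochMerge (Function.update a k v) i
      = Function.update (hochMerge a i) i (a i.castSucc * v) := by
  funext j
  simp only [hochMerge, Function.update_apply, Fin.ext_iff, Fin.coe_castSucc, Fin.val_succ]
  split_ifs <;> first
    | rfl
    | omega
    | (exact absurd ‹False› not_false)
    | (exact congrArg _ (Fin.val_injective (by first | omega | (simp; omega))))
    | (exact congrArg₂ _ (congrArg _ (Fin.val_injective (by first | omega | (simp; omega))))
        (congrArg _ (Fin.val_injective (by first | omega | (simp; omega)))))
    | (exact congrArg₂ _ rfl (congrArg _ (Fin.val_injective (by first | omega | (simp; omega)))))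
    | (exact congrArg₂ _ (congrArg _ (Fin.val_injective (by first | omega | (simp; omega)))) rfl)

theorem hochMerge_update_gt {d : ℕ} (a : Fin (d + 2) → A) (k : Fin (d + 2)) (v : A)
    (i : Fin (d + 1)) (h : (i : ℕ) + 1 < (k : ℕ)) :
    hochMerge (Function.update a k v) i
      = Function.update (hochMerge a i) ⟨(k : ℕ) - 1, by omega⟩ v := by
  funext j
  simp only [hochMerge, Function.update_apply, Fin.ext_iff, Fin.coe_castSucc, Fin.val_succ]
  split_ifs <;> first
    | rfl
    | omega
    | (exact absurd ‹False› not_false)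
    | (exact congrArg _ (Fin.val_injective (by first | omega | (simp; omega))))
    | (exact congrArg₂ _ (congrArg _ (Fin.val_injective (by first | omega | (simp; omega))))
        (congrArg _ (Fin.val_injective (by first | omega | (simp; omega)))))

theorem hochCyc_update_zero {d : ℕ} (a : Fin (d + 2) → A) (v : A) :
    hochCyc (Function.update a 0 v)
      = Function.update (hochCyc a) 0 (a (Fin.last (d + 1)) * v) := by
  funext j
  simp only [hochCyc, Function.update_apply, Fin.ext_iff, Fin.coe_castSucc, Fin.val_last,
    Fin.val_zero]
  split_ifs <;> first
    | rfl
    | omega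
    | (exact absurd ‹False› not_false)
    | (exact congrArg _ (Fin.val_injective (by first | omega | (simp; omega))))
    | (exact congrArg₂ _ (congrArg _ (Fin.val_injective (by first | omega | (simp; omega))))
        (congrArg _ (Fin.val_injective (by first | omega | (simp; omega)))))
    | (exact congrArg₂ _ rfl (congrArg _ (Fin.val_injective (by first | omega | (simp; omega)))))
    | (exact congrArg₂ _ (congrArg _ (Fin.val_injective (by first | omega | (simp; omega)))) rfl)

theorem hochCyc_update_last {d : ℕ} (a : Fin (d + 2) → A) (v : A) :
    hochCyc (Function.update a (Fin.last (d + 1)) v)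
      = Function.update (hochCyc a) 0 (v * a 0) := by
  funext j
  simp only [hochCyc, Function.update_apply, Fin.ext_iff, Fin.coe_castSucc, Fin.val_last,
    Fin.val_zero]
  split_ifs <;> first
    | rfl
    | omega
    | (exact absurd ‹False› not_false)
    | (exact congrArg _ (Fin.val_injective (by first | omega | (simp; omega))))
    | (exact congrArg₂ _ rfl (congrArg _ (Fin.val_injective (by first | omega | (simp; omega)))))
    | (exact congrArg₂ _ (congrArg _ (Fin.val_injective (by first | omega | (simp; omega)))) rfl)

theorem hochCyc_update_mid {d : ℕ} (a : Fin (d + 2) → A) (k : Fin (d + 2)) (v : A)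
    (h0 : (k : ℕ) ≠ 0) (hl : (k : ℕ) ≠ d + 1) :
    hochCyc (Function.update a k v)
      = Function.update (hochCyc a) ⟨(k : ℕ), by omega⟩ v := by
  funext j
  simp only [hochCyc, Function.update_apply, Fin.ext_iff, Fin.coe_castSucc, Fin.val_last,
    Fin.val_zero]
  split_ifs <;> first
    | rfl
    | omega
    | (exact absurd ‹False› not_false)
    | (exact congrArg _ (Fin.val_injective (by first | omega | (simp; omega))))
    | (exact congrArg₂ _ (congrArg _ (Fin.val_injective (by first | omega | (simp; omega))))
        (congrArg _ (Fin.val_injective (by first | omega | (simp; omega)))))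

end UpdateLemmas

section InsertNthLemmas

variable {α : Type*}

theorem insertNth_update {n : ℕ} (j : Fin (n + 1)) (x : α) (a : Fin n → α) (k : Fin n) (v : α) :
    Fin.insertNth (α := fun _ => α) j x (Function.update a k v)
      = Function.update (Fin.insertNth (α := fun _ => α) j x a) (j.succAbove k) v := by
  funext i
  induction i using Fin.succAboveCases
  · exact j
  · simp [Function.update_of_ne (Fin.succAbove_ne j k).symm]
  · rename_i l
    rcases eq_or_ne l k with h | h
    · subst h; simp
    · have h2 : j.succAbove l ≠ j.succAbove k := by
        simpa [Fin.succAbove_right_inj] using h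
      simp [Function.update_of_ne h, Function.update_of_ne h2]

theorem insertNth_eq_update {n : ℕ} (j : Fin (n + 1)) (x y : α) (a : Fin n → α) :
    Fin.insertNth (α := fun _ => α) j x a
      = Function.update (Fin.insertNth (α := fun _ => α) j y a) j x := by
  funext i
  induction i using Fin.succAboveCases
  · exact j
  · simp
  · rename_i l
    simp [Function.update_of_ne (Fin.succAbove_ne j l)]

theorem prod_ofFn_insertNth_one {D : Type*} [Monoid D] :
    ∀ {n : ℕ} (j : Fin (n + 1)) (d : Fin n → D),
      (List.ofFn (j.insertNth (1 : D) d)).prod = (List.ofFn d).prod := by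
  intro n
  induction n with
  | zero =>
    intro j d
    rw [Fin.fin_one_eq_zero j, Fin.insertNth_zero']
    simp
  | succ n ih =>
    intro j d
    induction j using Fin.cases with
    | zero =>
      rw [Fin.insertNth_zero']
      simp [List.ofFn_succ]
    | succ j =>
      have h : Fin.insertNth (α := fun _ => D) j.succ (1 : D) d
          = Fin.cons (d 0) (Fin.insertNth (α := fun _ => D) j (1 : D) (fun k => d k.succ)) := by
        funext i
        induction i using Fin.cases with
        | zero =>
          rw [Fin.cons_zero, show (0 : Fin (n + 2)) = j.succ.succAbove 0 from
            (Fin.succ_succAbove_zero j).symm, Fin.insertNth_apply_succAbove]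
        | succ k =>
          rw [Fin.cons_succ]
          induction k using Fin.succAboveCases
          · exact j
          · simp
          · rw [← Fin.succ_succAbove_succ, Fin.insertNth_apply_succAbove,
              Fin.insertNth_apply_succAbove]
      rw [h, List.ofFn_succ, Fin.cons_zero, List.prod_cons]
      simp only [Fin.cons_succ]
      rw [ih, List.ofFn_succ (f := d), List.prod_cons]

end InsertNthLemmas

section TensorLemmas

variable {K W D : Type*} [CommRing K] [Ring W] [Algebra K W] [Ring D] [Algebra K D]

theorem tmul_tuple_update {n : ℕ} (w : Fin n → W) (d : Fin n → D) (k : Fin n) (x : W) (y : D) :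
    Function.update (fun j => w j ⊗ₜ[K] d j) k (x ⊗ₜ[K] y)
      = fun j => Function.update w k x j ⊗ₜ[K] Function.update d k y j := by
  funext j
  rcases eq_or_ne j k with h | h
  · subst h; simp
  · simp [Function.update_of_ne h]

theorem hochMerge_tmul {d : ℕ} (w : Fin (d + 2) → W) (b : Fin (d + 2) → D) (i : Fin (d + 1)) :
    hochMerge (fun j => w j ⊗ₜ[K] b j) i = fun j => hochMerge w i j ⊗ₜ[K] hochMerge b i j := by
  funext j
  simp only [hochMerge]
  split_ifs <;> simp [Algebra.TensorProduct.tmul_mul_tmul]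

theorem hochCyc_tmul {d : ℕ} (w : Fin (d + 2) → W) (b : Fin (d + 2) → D) :
    hochCyc (fun j => w j ⊗ₜ[K] b j) = fun j => hochCyc w j ⊗ₜ[K] hochCyc b j := by
  funext j
  simp only [hochCyc]
  split_ifs <;> simp [Algebra.TensorProduct.tmul_mul_tmul]

theorem insertNth_tmul {n : ℕ} (j : Fin (n + 1)) (x : W) (y : D)
    (w : Fin n → W) (d : Fin n → D) :
    Fin.insertNth (α := fun _ => W ⊗[K] D) j (x ⊗ₜ[K] y) (fun k => w k ⊗ₜ[K] d k)
      = fun i => Fin.insertNth (α := fun _ => W) j x w i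
          ⊗ₜ[K] Fin.insertNth (α := fun _ => D) j y d i := by
  funext i
  induction i using Fin.succAboveCases
  · exact j
  · simp
  · simp

theorem tensor_multiadditive_eq_zero {P : Type*} [AddCommGroup P] {n : ℕ}
    (F : (Fin n → W ⊗[K] D) → P)
    (hadd : ∀ (a : Fin n → W ⊗[K] D) (j : Fin n) (x y : W ⊗[K] D),
      F (Function.update a j (x + y)) = F (Function.update a j x) + F (Function.update a j y))
    (hpure : ∀ (w : Fin n → W) (d : Fin n → D), F (fun j => w j ⊗ₜ[K] d j) = 0)
    (a : Fin n → W ⊗[K] D) : F a = 0 := by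
  suffices H : ∀ (k : ℕ) (a : Fin n → W ⊗[K] D),
      (∀ j : Fin n, k ≤ (j : ℕ) → ∃ p : W × D, a j = p.1 ⊗ₜ[K] p.2) → F a = 0 by
    exact H n a (fun j hj => absurd (lt_of_le_of_lt hj j.isLt) (lt_irrefl n))
  intro k
  induction k with
  | zero =>
    intro a ha
    choose p hp using fun j => ha j (Nat.zero_le _)
    have : a = fun j => (p j).1 ⊗ₜ[K] (p j).2 := funext hp
    rw [this]
    exact hpure _ _
  | succ k ih =>
    intro a ha
    by_cases hk : k < n
    · have key : ∀ x : W ⊗[K] D, F (Function.update a ⟨k, hk⟩ x) = 0 := by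
        intro x
        induction x using TensorProduct.induction_on with
        | zero =>
          rw [show (0 : W ⊗[K] D) = (0 : W) ⊗ₜ[K] (0 : D) from (TensorProduct.zero_tmul _ _).symm]
          apply ih
          intro j hj
          rcases eq_or_ne j ⟨k, hk⟩ with h | h
          · subst h
            exact ⟨(0, 0), Function.update_self _ _ _⟩
          · rw [Function.update_of_ne h]
            refine ha j ?_
            have : (j : ℕ) ≠ k := fun hh => h (Fin.ext hh)
            omega
        | tmul wx dx =>
          apply ih
          intro j hj
          rcases eq_or_ne j ⟨k, hk⟩ with h | h
          · subst h
            exact ⟨(wx, dx), Function.update_self _ _ _⟩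
          · rw [Function.update_of_ne h]
            refine ha j ?_
            have : (j : ℕ) ≠ k := fun hh => h (Fin.ext hh)
            omega
        | add x y hx hy =>
          rw [hadd, hx, hy, add_zero]
      have := key (a ⟨k, hk⟩)
      rwa [Function.update_eq_self] at this
    · apply ih
      intro j hj
      exact absurd (lt_of_le_of_lt hj j.isLt) (by omega)

end TensorLemmas

/-- Let `φ` be the normalized trace on the Dunkl–Weyl algebra `D` and let
`ψ_{2n−2}` (with `2n − 2 = 2m`) be defined on `W_{n−1}((ħ₁)) ⊗ D` by
`ψ(a₀⊗b₀, …, a_{2m}⊗b_{2m}) = τ_{2m}(a₀,…,a_{2m})·φ(b₀ ⋆ ⋯ ⋆ b_{2m})`, where `τ_{2m}` is a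
normalized `sp_{2n−2}`-basic Hochschild cocycle of the Weyl algebra.  Then `ψ` is a
Hochschild `2m`-cocycle, and it is basic with respect to `sp_{2n−2} ⊕ u₁` embedded via
`A ⊕ α ↦ (1/2)Σ a_{ij} w_i w_j ⊗ 1 + 1 ⊗ α z z̄` (the quadratic span `SpW` and the element
`z z̄ = wD`): both the Lie derivative and the contraction along any `γ` in the image
vanish. -/
theorem psi_is_basic_hochschild_cocycle
    {K W D : Type*} [Field K] [Ring W] [Algebra K W] [Ring D] [Algebra K D]
    (m : ℕ) (hb1 : K) (hhb1 : hb1 ≠ 0)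
    (τ : MultilinearMap K (fun _ : Fin (2 * m + 1) => W) K)
    (SpW : Submodule K W) (wD : D)
    (φD : D →ₗ[K] K) (hφ1 : φD 1 = 1) (hφtr : ∀ x y : D, φD (x * y - y * x) = 0)
    (hτcoc : IsHochschildCocycle τ)
    (hτnorm : ∀ a : Fin (2 * m + 1) → W, (∃ j, j ≠ 0 ∧ a j = 1) → τ a = 0)
    (hτbasicLie : ∀ s ∈ SpW, ∀ a : Fin (2 * m + 1) → W,
      ∑ j, τ (Function.update a j (hb1⁻¹ • (s * a j - a j * s))) = 0)
    (hτbasicContr : ∀ s ∈ SpW, ∀ a : Fin (2 * m) → W,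
      ∑ j ∈ Finset.univ.filter (fun j : Fin (2 * m + 1) => j ≠ 0), τ (j.insertNth s a) = 0)
    (ψ : MultilinearMap K (fun _ : Fin (2 * m + 1) => W ⊗[K] D) K)
    (hψ : ∀ (a : Fin (2 * m + 1) → W) (b : Fin (2 * m + 1) → D),
      ψ (fun j => a j ⊗ₜ[K] b j) = τ a * φD (List.ofFn b).prod) :
    IsHochschildCocycle ψ ∧
      ∀ s ∈ SpW, ∀ c : K,
        (∀ a : Fin (2 * m + 1) → W ⊗[K] D,
          ∑ j, ψ (Function.update a j (hb1⁻¹ •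
            ((s ⊗ₜ[K] (1 : D) + (1 : W) ⊗ₜ[K] (c • wD)) * a j -
              a j * (s ⊗ₜ[K] (1 : D) + (1 : W) ⊗ₜ[K] (c • wD))))) = 0) ∧
        (∀ a : Fin (2 * m) → W ⊗[K] D,
          ∑ j ∈ Finset.univ.filter (fun j : Fin (2 * m + 1) => j ≠ 0),
            ψ (j.insertNth (s ⊗ₜ[K] (1 : D) + (1 : W) ⊗ₜ[K] (c • wD)) a) = 0) := by
  classical
  have φcomm : ∀ x y : D, φD (x * y) = φD (y * x) := fun x y =>
    sub_eq_zero.mp (by rw [← map_sub]; exact hφtr x y)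
  constructor
  · -- cocycle property
    intro a
    refine tensor_multiadditive_eq_zero
      (fun a => (∑ i : Fin (2 * m + 1), (-1 : K) ^ (i : ℕ) • ψ (hochMerge a i)) +
        (-1 : K) ^ (2 * m + 1) • ψ (hochCyc a)) ?_ ?_ a
    · intro a k x y
      have hmerge : ∀ i : Fin (2 * m + 1),
          ψ (hochMerge (Function.update a k (x + y)) i)
            = ψ (hochMerge (Function.update a k x) i)
              + ψ (hochMerge (Function.update a k y) i) := by
        intro i
        rcases lt_trichotomy (k : ℕ) (i : ℕ) with h | h | h
        · rw [hochMerge_update_lt a k _ i h, hochMerge_update_lt a k _ i h,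
            hochMerge_update_lt a k _ i h, ψ.map_update_add]
        · rw [hochMerge_update_eq a k _ i h, hochMerge_update_eq a k _ i h,
            hochMerge_update_eq a k _ i h, add_mul, ψ.map_update_add]
        · rcases eq_or_lt_of_le (show (i : ℕ) + 1 ≤ (k : ℕ) from h) with h2 | h2
          · rw [hochMerge_update_eqsucc a k _ i h2.symm, hochMerge_update_eqsucc a k _ i h2.symm,
              hochMerge_update_eqsucc a k _ i h2.symm, mul_add, ψ.map_update_add]
          · rw [hochMerge_update_gt a k _ i h2, hochMerge_update_gt a k _ i h2,
              hochMerge_update_gt a k _ i h2, ψ.map_update_add]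
      have hcyc : ψ (hochCyc (Function.update a k (x + y)))
          = ψ (hochCyc (Function.update a k x)) + ψ (hochCyc (Function.update a k y)) := by
        rcases eq_or_ne ((k : ℕ)) 0 with h | h
        · have hk0 : k = 0 := Fin.ext h
          subst hk0
          rw [hochCyc_update_zero, hochCyc_update_zero, hochCyc_update_zero, mul_add, ψ.map_update_add]
        · rcases eq_or_ne ((k : ℕ)) (2 * m + 1) with h2 | h2
          · have hkl : k = Fin.last (2 * m + 1) := Fin.ext (by simpa using h2)
            subst hkl
            rw [hochCyc_update_last, hochCyc_update_last, hochCyc_update_last, add_mul,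
              ψ.map_update_add]
          · rw [hochCyc_update_mid a k _ h h2, hochCyc_update_mid a k _ h h2,
              hochCyc_update_mid a k _ h h2, ψ.map_update_add]
      simp only [hmerge, hcyc, smul_add, Finset.sum_add_distrib]
      abel
    · intro w d
      have hM : ∀ i : Fin (2 * m + 1), ψ (hochMerge (fun j => w j ⊗ₜ[K] d j) i)
          = τ (hochMerge w i) * φD ((List.ofFn d).prod) := by
        intro i
        rw [hochMerge_tmul, hψ, prod_ofFn_hochMerge]
      have hC : ψ (hochCyc (fun j => w j ⊗ₜ[K] d j))
          = τ (hochCyc w) * φD ((List.ofFn d).prod) := by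
        rw [hochCyc_tmul, hψ, prod_ofFn_hochCyc]
        congr 1
        rw [φcomm]
        congr 1
        rw [List.ofFn_succ' (f := d), List.prod_concat]
      simp only [hM, hC]
      have hfac : (∑ i : Fin (2 * m + 1),
            (-1 : K) ^ (i : ℕ) • (τ (hochMerge w i) * φD ((List.ofFn d).prod)))
            + (-1 : K) ^ (2 * m + 1) • (τ (hochCyc w) * φD ((List.ofFn d).prod))
          = ((∑ i : Fin (2 * m + 1), (-1 : K) ^ (i : ℕ) • τ (hochMerge w i))
            + (-1 : K) ^ (2 * m + 1) • τ (hochCyc w)) * φD ((List.ofFn d).prod) := by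
        rw [add_mul, Finset.sum_mul]
        simp [smul_mul_assoc, mul_assoc]
      rw [hfac, hτcoc w, zero_mul]
  · intro s hs c
    set γ : W ⊗[K] D := s ⊗ₜ[K] (1 : D) + (1 : W) ⊗ₜ[K] (c • wD) with hγ
    constructor
    · -- Lie derivative
      intro a
      refine tensor_multiadditive_eq_zero
        (fun a => ∑ j, ψ (Function.update a j (hb1⁻¹ • (γ * a j - a j * γ)))) ?_ ?_ a
      · intro a k x y
        have hterm : ∀ j : Fin (2 * m + 1),
            ψ (Function.update (Function.update a k (x + y)) j
                (hb1⁻¹ • (γ * (Function.update a k (x + y)) j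
                  - (Function.update a k (x + y)) j * γ)))
            = ψ (Function.update (Function.update a k x) j
                (hb1⁻¹ • (γ * (Function.update a k x) j - (Function.update a k x) j * γ)))
              + ψ (Function.update (Function.update a k y) j
                (hb1⁻¹ • (γ * (Function.update a k y) j - (Function.update a k y) j * γ))) := by
          intro j
          rcases eq_or_ne j k with h | h
          · subst h
            rw [Function.update_self, Function.update_self, Function.update_self,
              Function.update_idem, Function.update_idem, Function.update_idem]
            have hL : hb1⁻¹ • (γ * (x + y) - (x + y) * γ)
                = hb1⁻¹ • (γ * x - x * γ) + hb1⁻¹ • (γ * y - y * γ) := by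
              rw [← smul_add]
              congr 1
              noncomm_ring
            rw [hL, ψ.map_update_add]
          · rw [Function.update_of_ne h, Function.update_of_ne h, Function.update_of_ne h,
              Function.update_comm h.symm, Function.update_comm h.symm,
              Function.update_comm h.symm, ψ.map_update_add]
        simp only [hterm]
        rw [Finset.sum_add_distrib]
      · intro w d
        have hcomm : ∀ j : Fin (2 * m + 1),
            hb1⁻¹ • (γ * (w j ⊗ₜ[K] d j) - (w j ⊗ₜ[K] d j) * γ)
              = (hb1⁻¹ • (s * w j - w j * s)) ⊗ₜ[K] d j
                + (hb1⁻¹ * c) • (w j ⊗ₜ[K] (wD * d j - d j * wD)) := by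
          intro j
          have h1 : γ * (w j ⊗ₜ[K] d j) - (w j ⊗ₜ[K] d j) * γ
              = (s * w j - w j * s) ⊗ₜ[K] d j + c • (w j ⊗ₜ[K] (wD * d j - d j * wD)) := by
            rw [hγ]
            simp only [add_mul, mul_add, Algebra.TensorProduct.tmul_mul_tmul, one_mul, mul_one,
              smul_mul_assoc, mul_smul_comm, TensorProduct.tmul_smul,
              TensorProduct.sub_tmul, TensorProduct.tmul_sub, smul_sub]
            abel
          rw [h1, smul_add, smul_smul, TensorProduct.smul_tmul', smul_sub]
        have hsplit : ∀ j : Fin (2 * m + 1),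
            ψ (Function.update (fun t => w t ⊗ₜ[K] d t) j
              (hb1⁻¹ • (γ * (w j ⊗ₜ[K] d j) - (w j ⊗ₜ[K] d j) * γ)))
            = τ (Function.update w j (hb1⁻¹ • (s * w j - w j * s))) * φD ((List.ofFn d).prod)
              + (hb1⁻¹ * c) • (τ w
                  * φD ((List.ofFn (Function.update d j (wD * d j - d j * wD))).prod)) := by
          intro j
          rw [hcomm j]
          rw [ψ.map_update_add, ψ.map_update_smul]
          congr 1
          · rw [show ((hb1⁻¹ • (s * w j - w j * s)) ⊗ₜ[K] d j)
                = (hb1⁻¹ • (s * w j - w j * s)) ⊗ₜ[K] (d j) from rfl,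
              tmul_tuple_update]
            simp only [Function.update_eq_self]
            rw [hψ]
          · rw [tmul_tuple_update]
            simp only [Function.update_eq_self]
            rw [hψ]
        simp only [hsplit]
        rw [Finset.sum_add_distrib]
        have t1 : ∑ j : Fin (2 * m + 1),
            τ (Function.update w j (hb1⁻¹ • (s * w j - w j * s))) * φD ((List.ofFn d).prod)
            = 0 := by
          rw [← Finset.sum_mul, hτbasicLie s hs w, zero_mul]
        have t2 : ∑ j : Fin (2 * m + 1), (hb1⁻¹ * c) • (τ w
            * φD ((List.ofFn (Function.update d j (wD * d j - d j * wD))).prod)) = 0 := by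
          rw [← Finset.smul_sum, ← Finset.mul_sum, ← map_sum, sum_prod_update_comm wD d,
            hφtr, mul_zero, smul_zero]
        rw [t1, t2, add_zero]
    · -- contraction
      intro a
      refine tensor_multiadditive_eq_zero
        (fun a => ∑ j ∈ Finset.univ.filter (fun j : Fin (2 * m + 1) => j ≠ 0),
          ψ (j.insertNth γ a)) ?_ ?_ a
      · intro a k x y
        have hterm : ∀ j : Fin (2 * m + 1),
            ψ (j.insertNth γ (Function.update a k (x + y)))
              = ψ (j.insertNth γ (Function.update a k x))
                + ψ (j.insertNth γ (Function.update a k y)) := by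
          intro j
          rw [insertNth_update, insertNth_update, insertNth_update, ψ.map_update_add]
        simp only [hterm]
        rw [Finset.sum_add_distrib]
      · intro w d
        have hterm : ∀ j : Fin (2 * m + 1), j ≠ 0 →
            ψ (j.insertNth γ (fun t => w t ⊗ₜ[K] d t))
              = τ (j.insertNth s w) * φD ((List.ofFn d).prod) := by
          intro j hj
          have hsum : ψ (j.insertNth γ (fun t => w t ⊗ₜ[K] d t))
              = ψ (j.insertNth (s ⊗ₜ[K] (1 : D)) (fun t => w t ⊗ₜ[K] d t))
                + ψ (j.insertNth ((1 : W) ⊗ₜ[K] (c • wD)) (fun t => w t ⊗ₜ[K] d t)) := by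
            rw [hγ, insertNth_eq_update j (s ⊗ₜ[K] (1 : D) + (1 : W) ⊗ₜ[K] (c • wD))
              (s ⊗ₜ[K] (1 : D)) (fun t => w t ⊗ₜ[K] d t), ψ.map_update_add,
              ← insertNth_eq_update j (s ⊗ₜ[K] (1 : D)) (s ⊗ₜ[K] (1 : D)),
              ← insertNth_eq_update j ((1 : W) ⊗ₜ[K] (c • wD)) (s ⊗ₜ[K] (1 : D))]
          rw [hsum]
          have hA : ψ (j.insertNth (s ⊗ₜ[K] (1 : D)) (fun t => w t ⊗ₜ[K] d t))
              = τ (j.insertNth s w) * φD ((List.ofFn d).prod) := by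
            rw [insertNth_tmul, hψ, prod_ofFn_insertNth_one]
          have hB : ψ (j.insertNth ((1 : W) ⊗ₜ[K] (c • wD)) (fun t => w t ⊗ₜ[K] d t)) = 0 := by
            rw [show ((1 : W) ⊗ₜ[K] (c • wD)) = c • ((1 : W) ⊗ₜ[K] wD) from
              (TensorProduct.tmul_smul c (1 : W) wD)]
            rw [insertNth_eq_update j (c • ((1 : W) ⊗ₜ[K] wD)) ((1 : W) ⊗ₜ[K] wD),
              ψ.map_update_smul, ← insertNth_eq_update j ((1 : W) ⊗ₜ[K] wD) ((1 : W) ⊗ₜ[K] wD),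
              insertNth_tmul, hψ, hτnorm _ ⟨j, hj, Fin.insertNth_apply_same j 1 w⟩,
              zero_mul, smul_zero]
          rw [hA, hB, add_zero]
        refine Eq.trans (Finset.sum_congr rfl
          (fun j hj => hterm j (Finset.mem_filter.mp hj).2)) ?_
        rw [← Finset.sum_mul, hτbasicContr s hs w, zero_mul]
end
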